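/- The number of linear extensions of a forest poset P on n elements equals n! divided by the product over all i of the size of the principal order ideal {j : j ≤_P i} (the hook-length formula for forests). -/

import Mathlib

open Finset

-- every element has a maximal element above it
lemma hook_exists_max {n : ℕ} (le : Fin n → Fin n → Prop) [DecidableRel le]
    (hrefl : ∀ i, le i i)
    (hantisymm : ∀ i j, le i j → le j i → i = j)
    (htrans : ∀ i j k, le i j → le j k → le i k) (j : Fin n) :
    ∃ m, le j m ∧ ∀ k, le m k → m = k := by
  suffices h : ∀ (c : ℕ) (j : Fin n), (univ.filter (fun k => le j k)).card ≤ c →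
      ∃ m, le j m ∧ ∀ k, le m k → m = k from h _ j le_rfl
  intro c
  induction c with
  | zero =>
    intro j hj
    simp only [Nat.le_zero, card_eq_zero, filter_eq_empty_iff] at hj
    exact absurd (hrefl j) (hj (mem_univ j))
  | succ c ih =>
    intro j hj
    by_cases hmax : ∀ k, le j k → j = k
    · exact ⟨j, hrefl j, hmax⟩
    · push_neg at hmax
      obtain ⟨k, hk, hjk⟩ := hmax
      have hcard : (univ.filter (fun x => le k x)).card ≤ c := by
        have hsub : univ.filter (fun x => le k x) ⊆ (univ.filter (fun x => le j x)).erase j := by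
          intro x hx
          simp only [mem_filter, mem_univ, true_and] at hx
          refine mem_erase.mpr ⟨?_, mem_filter.mpr ⟨mem_univ _, htrans _ _ _ hk hx⟩⟩
          rintro rfl
          exact hjk (hantisymm _ _ hk hx)
        have := card_le_card hsub
        have hje : j ∈ univ.filter (fun x => le j x) := mem_filter.mpr ⟨mem_univ _, hrefl j⟩
        rw [card_erase_of_mem hje] at this
        omega
      obtain ⟨m, hm1, hm2⟩ := ih k hcard
      exact ⟨m, htrans _ _ _ hk hm1, hm2⟩


lemma hook_sum_max {n : ℕ} (le : Fin n → Fin n → Prop) [DecidableRel le]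
    (hrefl : ∀ i, le i i)
    (hantisymm : ∀ i j, le i j → le j i → i = j)
    (htrans : ∀ i j k, le i j → le j k → le i k)
    (hforest : ∀ i j k, le i j → le i k → le j k ∨ le k j)
    (hexmax : ∀ j : Fin n, ∃ m, le j m ∧ ∀ k, le m k → m = k) :
    ∑ m ∈ univ.filter (fun m => ∀ k, le m k → m = k),
      (univ.filter (fun j => le j m)).card = n := by
  classical
  have hdisj : ((univ.filter (fun m => ∀ k, le m k → m = k) : Finset (Fin n)) : Set (Fin n)).PairwiseDisjoint
      (fun m => univ.filter (fun j => le j m)) := by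
    intro a ha b hb hab
    simp only [coe_filter, Set.mem_setOf_eq, mem_univ, true_and] at ha hb
    refine disjoint_left.mpr ?_
    intro x hxa hxb
    simp only [mem_filter, mem_univ, true_and] at hxa hxb
    rcases hforest x a b hxa hxb with h | h
    · exact hab (ha _ h)
    · exact hab ((hb _ h).symm)
  have hcover : (univ.filter (fun m => ∀ k, le m k → m = k)).biUnion
      (fun m => univ.filter (fun j => le j m)) = univ := by
    refine eq_univ_iff_forall.mpr fun j => ?_
    obtain ⟨m, hjm, hmax⟩ := hexmax j
    exact mem_biUnion.mpr ⟨m, mem_filter.mpr ⟨mem_univ _, hmax⟩,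
      mem_filter.mpr ⟨mem_univ _, hjm⟩⟩
  calc ∑ m ∈ univ.filter (fun m => ∀ k, le m k → m = k),
        (univ.filter (fun j => le j m)).card
      = ((univ.filter (fun m => ∀ k, le m k → m = k)).biUnion
          (fun m => univ.filter (fun j => le j m))).card := (card_biUnion hdisj).symm
    _ = n := by rw [hcover, card_univ, Fintype.card_fin]

lemma hook_fiber_card {n : ℕ} (le : Fin (n+1) → Fin (n+1) → Prop) [DecidableRel le]
    (m : Fin (n+1)) (hmax : ∀ k, le m k → m = k) :
    ((univ.filter (fun σ : Equiv.Perm (Fin (n+1)) => ∀ a b, le (σ a) (σ b) → a ≤ b)).filter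
        (fun σ => σ (Fin.last n) = m)).card =
      (univ.filter (fun τ : Equiv.Perm (Fin n) =>
        ∀ a b, le (m.succAbove (τ a)) (m.succAbove (τ b)) → a ≤ b)).card := by
  classical
  set Φ : Equiv.Perm (Fin n) → Equiv.Perm (Fin (n+1)) :=
    fun τ => finSuccEquivLast.trans ((Equiv.optionCongr τ).trans (finSuccEquiv' m).symm) with hΦ
  have hΦcast : ∀ (τ : Equiv.Perm (Fin n)) (a : Fin n),
      Φ τ (Fin.castSucc a) = m.succAbove (τ a) := by
    intro τ a
    simp [hΦ, finSuccEquivLast_castSucc, finSuccEquiv'_symm_some]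
  have hΦlast : ∀ (τ : Equiv.Perm (Fin n)), Φ τ (Fin.last n) = m := by
    intro τ
    simp [hΦ, finSuccEquivLast_last, finSuccEquiv'_symm_none]
  refine (Finset.card_bij (fun τ _ => Φ τ) ?_ ?_ ?_).symm
  · -- maps into the fiber
    intro τ hτ
    simp only [mem_filter, mem_univ, true_and] at hτ ⊢
    constructor
    · intro a b hab
      induction a using Fin.lastCases with
      | last =>
        induction b using Fin.lastCases with
        | last => exact le_refl _
        | cast b' =>
          rw [hΦlast, hΦcast] at hab
          exact absurd (hmax _ hab).symm (Fin.succAbove_ne m (τ b'))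
      | cast a' =>
        induction b using Fin.lastCases with
        | last => exact Fin.le_last _
        | cast b' =>
          rw [hΦcast, hΦcast] at hab
          exact Fin.castSucc_le_castSucc_iff.mpr (hτ _ _ hab)
    · exact hΦlast τ
  · -- injective
    intro τ1 h1 τ2 h2 heq
    apply Equiv.ext; intro a
    have := congrArg (fun σ : Equiv.Perm (Fin (n+1)) => σ (Fin.castSucc a)) heq
    simp only [hΦcast] at this
    exact Fin.succAbove_right_injective this
  · -- surjective
    intro σ hσ
    simp only [mem_filter, mem_univ, true_and] at hσ
    obtain ⟨hext, hlast⟩ := hσ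
    set ρ : Option (Fin n) ≃ Option (Fin n) :=
      finSuccEquivLast.symm.trans (σ.trans (finSuccEquiv' m)) with hρ
    have hρsome : ∀ a : Fin n, ρ (some a) = finSuccEquiv' m (σ (Fin.castSucc a)) := by
      intro a; simp [hρ, finSuccEquivLast_symm_some]
    have hne : ∀ a : Fin n, σ (Fin.castSucc a) ≠ m := by
      intro a h
      have : Fin.castSucc a = Fin.last n := σ.injective (h.trans hlast.symm)
      exact absurd this (Fin.castSucc_lt_last a).ne
    have hsome : ∀ a : Fin n, ∃ b, ρ (some a) = some b := by
      intro a
      rw [hρsome]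
      obtain ⟨b, hb⟩ := Fin.exists_succAbove_eq (hne a)
      exact ⟨b, by rw [← hb, finSuccEquiv'_succAbove]⟩
    set τ := ρ.removeNone with hτ
    have hτsome : ∀ a : Fin n, m.succAbove (τ a) = σ (Fin.castSucc a) := by
      intro a
      have h1 : some (τ a) = ρ (some a) := Equiv.removeNone_some ρ (hsome a)
      rw [hρsome] at h1
      have := congrArg (finSuccEquiv' m).symm h1
      simpa [finSuccEquiv'_symm_some] using this
    refine ⟨τ, ?_, ?_⟩
    · simp only [mem_filter, mem_univ, true_and]
      intro a b hab
      rw [hτsome, hτsome] at hab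
      exact Fin.castSucc_le_castSucc_iff.mp (hext _ _ hab)
    · ext x
      induction x using Fin.lastCases with
      | last => rw [hΦlast, hlast]
      | cast a => rw [hΦcast, hτsome]


lemma hook_key : ∀ (n : ℕ) (le : Fin n → Fin n → Prop) [DecidableRel le],
    (∀ i, le i i) → (∀ i j, le i j → le j i → i = j) →
    (∀ i j k, le i j → le j k → le i k) →
    (∀ i j k, le i j → le i k → le j k ∨ le k j) →
    (univ.filter (fun σ : Equiv.Perm (Fin n) => ∀ a b : Fin n, le (σ a) (σ b) → a ≤ b)).card *
      ∏ i : Fin n, (univ.filter (fun j => le j i)).card = n.factorial := by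
  intro n
  induction n with
  | zero =>
    intro le _ _ _ _ _
    have h1 : (univ.filter (fun σ : Equiv.Perm (Fin 0) =>
        ∀ a b : Fin 0, le (σ a) (σ b) → a ≤ b)) = univ :=
      filter_true_of_mem (fun σ _ => fun a _ _ => a.elim0)
    rw [h1, card_univ, Fintype.card_perm]
    simp
  | succ n ih =>
    intro le inst hrefl hantisymm htrans hforest
    classical
    set maxSet : Finset (Fin (n+1)) := univ.filter (fun m => ∀ k, le m k → m = k) with hmaxSet
    set Ext : Finset (Equiv.Perm (Fin (n+1))) :=
      univ.filter (fun σ => ∀ a b : Fin (n+1), le (σ a) (σ b) → a ≤ b) with hExt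
    -- step 1: fiberwise decomposition over the maximal element σ (last n)
    have hmem : ∀ σ ∈ Ext, σ (Fin.last n) ∈ maxSet := by
      intro σ hσ
      simp only [hExt, mem_filter, mem_univ, true_and] at hσ
      simp only [hmaxSet, mem_filter, mem_univ, true_and]
      intro k hk
      obtain ⟨b, rfl⟩ := σ.surjective k
      have hb : Fin.last n ≤ b := hσ _ _ hk
      have : b = Fin.last n := le_antisymm (Fin.le_last b) hb
      rw [this]
    have hsplit : Ext.card = ∑ m ∈ maxSet, (Ext.filter (fun σ => σ (Fin.last n) = m)).card :=
      card_eq_sum_card_fiberwise hmem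
    -- per-maximal-element computation
    have hper : ∀ m ∈ maxSet,
        (Ext.filter (fun σ => σ (Fin.last n) = m)).card *
          ∏ i : Fin (n+1), (univ.filter (fun j => le j i)).card
        = n.factorial * (univ.filter (fun j => le j m)).card := by
      intro m hm
      simp only [hmaxSet, mem_filter, mem_univ, true_and] at hm
      set le' : Fin n → Fin n → Prop := fun a b => le (m.succAbove a) (m.succAbove b) with hle'
      haveI : DecidableRel le' := fun a b => inferInstanceAs (Decidable (le _ _))
      have h1 : (Ext.filter (fun σ => σ (Fin.last n) = m)).card =
          (univ.filter (fun τ : Equiv.Perm (Fin n) =>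
            ∀ a b : Fin n, le' (τ a) (τ b) → a ≤ b)).card := by
        simp only [hle']
        rw [hExt]
        rw [hook_fiber_card le m hm]
        congr
      have hIH := ih le' (fun i => hrefl _)
        (fun i j hij hji => Fin.succAbove_right_injective (hantisymm _ _ hij hji))
        (fun i j k hij hjk => htrans _ _ _ hij hjk)
        (fun i j k hij hik => by
          rcases hforest _ _ _ hij hik with h | h
          · exact Or.inl h
          · exact Or.inr h)
      -- hook sizes transfer
      have h2 : ∀ i : Fin n, (univ.filter (fun j => le' j i)).card =
          (univ.filter (fun j => le j (m.succAbove i))).card := by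
        intro i
        refine Finset.card_bij (fun j _ => m.succAbove j) ?_ ?_ ?_
        · intro j hj
          simp only [mem_filter, mem_univ, true_and] at hj ⊢
          exact hj
        · intro a _ b _ hab
          exact Fin.succAbove_right_injective hab
        · intro x hx
          simp only [mem_filter, mem_univ, true_and] at hx
          have hxm : x ≠ m := by
            intro heq
            rw [heq] at hx
            exact Fin.succAbove_ne m i (hm _ hx).symm
          obtain ⟨j, hj⟩ := Fin.exists_succAbove_eq hxm
          refine ⟨j, ?_, hj⟩
          simp only [mem_filter, mem_univ, true_and, hle', hj]
          exact hx
      have h3 : ∏ i : Fin n, (univ.filter (fun j => le' j i)).card =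
          ∏ x ∈ univ.erase m, (univ.filter (fun j => le j x)).card := by
        rw [Finset.prod_congr rfl (fun i _ => h2 i)]
        refine Finset.prod_bij (fun i _ => m.succAbove i) ?_ ?_ ?_ ?_
        · intro i _
          exact mem_erase.mpr ⟨Fin.succAbove_ne m i, mem_univ _⟩
        · intro a _ b _ hab
          exact Fin.succAbove_right_injective hab
        · intro x hx
          obtain ⟨j, hj⟩ := Fin.exists_succAbove_eq (mem_erase.mp hx).1
          exact ⟨j, mem_univ _, hj⟩
        · intro i _; rfl
      have h4 : ∏ i : Fin (n+1), (univ.filter (fun j => le j i)).card =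
          (univ.filter (fun j => le j m)).card *
            ∏ x ∈ univ.erase m, (univ.filter (fun j => le j x)).card :=
        (Finset.mul_prod_erase univ _ (mem_univ m)).symm
      calc (Ext.filter (fun σ => σ (Fin.last n) = m)).card *
            ∏ i : Fin (n+1), (univ.filter (fun j => le j i)).card
          = (univ.filter (fun τ : Equiv.Perm (Fin n) =>
              ∀ a b : Fin n, le' (τ a) (τ b) → a ≤ b)).card *
            ((univ.filter (fun j => le j m)).card *
              ∏ i : Fin n, (univ.filter (fun j => le' j i)).card) := by
              rw [h1, h4, h3]; try ring
        _ = n.factorial * (univ.filter (fun j => le j m)).card := by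
              rw [← mul_assoc, mul_comm _ (univ.filter (fun j => le j m)).card,
                mul_assoc, hIH, mul_comm]
    -- sum over maximal elements
    have hsum : ∑ m ∈ maxSet, (univ.filter (fun j => le j m)).card = n + 1 :=
      hook_sum_max le hrefl hantisymm htrans hforest
        (fun j => hook_exists_max le hrefl hantisymm htrans j)
    calc Ext.card * ∏ i : Fin (n+1), (univ.filter (fun j => le j i)).card
        = ∑ m ∈ maxSet, (Ext.filter (fun σ => σ (Fin.last n) = m)).card *
            ∏ i : Fin (n+1), (univ.filter (fun j => le j i)).card := by
          rw [hsplit, Finset.sum_mul]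
      _ = ∑ m ∈ maxSet, n.factorial * (univ.filter (fun j => le j m)).card :=
          Finset.sum_congr rfl hper
      _ = n.factorial * (n + 1) := by rw [← Finset.mul_sum, hsum]
      _ = (n+1).factorial := by rw [Nat.factorial_succ, mul_comm]


/-- Hook-length formula for forests: the number of linear extensions of a forest
poset `P` on `n` elements equals `n!` divided by the product over all `i` of the
size of the principal order ideal `{j : j ≤_P i}`. -/
theorem forest_poset_hook_length_formula (n : ℕ)
    (le : Fin n → Fin n → Prop) [DecidableRel le]
    (hrefl : ∀ i, le i i)
    (hantisymm : ∀ i j, le i j → le j i → i = j)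
    (htrans : ∀ i j k, le i j → le j k → le i k)
    (hforest : ∀ i j k, le i j → le i k → le j k ∨ le k j) :
    (Finset.univ.filter
        (fun σ : Equiv.Perm (Fin n) => ∀ a b : Fin n, le (σ a) (σ b) → a ≤ b)).card *
      ∏ i : Fin n, (Finset.univ.filter (fun j => le j i)).card = n.factorial := by
  exact hook_key n le hrefl hantisymm htrans hforest
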